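/- Strict monotonicity of the terminal values of backward shocks (Lemma 3.1): Let f, θ, T be as in the context. (a) Fix B > θ; if 0 < R₁ < R₂ < T·f'(B) and y₁, y₂ are solutions of the left backward-shock Cauchy problems with data (R₁,B) and (R₂,B) respectively, then y₁(T) < y₂(T). (b) Fix A < θ; if T·f'(A) < L₁ < L₂ < 0 and x₁, x₂ are solutions of the right backward-shock Cauchy problems with data (L₁,A) and (L₂,A) respectively, then x₁(T) < x₂(T). -/

import Mathlib

noncomputable section

open Set Filter
open Topology

/-- The Rankine–Hugoniot speed `λ(u,v) = (f(v) - f(u)) / (v - u)`. -/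
def lamF (f : ℝ → ℝ) (u v : ℝ) : ℝ := (f v - f u) / (v - u)

/-- `y` solves the left backward-shock Cauchy problem with data `(R, B)` on
`[R / f'(B), T]`:  `y(R/f'(B)) = 0` and `y'(t) = λ((f')⁻¹((y(t)+R)/t), B̄)`.
Here `finv` denotes the inverse of `deriv f`. -/
def LeftShockSol (f finv : ℝ → ℝ) (T B Bbar R : ℝ) (y : ℝ → ℝ) : Prop :=
  y (R / deriv f B) = 0 ∧
  ∀ t ∈ Icc (R / deriv f B) T,
    HasDerivWithinAt y (lamF f (finv ((y t + R) / t)) Bbar) (Icc (R / deriv f B) T) t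

/-- `x` solves the right backward-shock Cauchy problem with data `(L, A)` on
`[L / f'(A), T]`:  `x(L/f'(A)) = 0` and `x'(t) = λ((f')⁻¹((x(t)+L)/t), Ā)`.
Here `finv` denotes the inverse of `deriv f`. -/
def RightShockSol (f finv : ℝ → ℝ) (T A Abar L : ℝ) (x : ℝ → ℝ) : Prop :=
  x (L / deriv f A) = 0 ∧
  ∀ t ∈ Icc (L / deriv f A) T,
    HasDerivWithinAt x (lamF f (finv ((x t + L) / t)) Abar) (Icc (L / deriv f A) T) t

lemma barrier_le {a b : ℝ} {g g' : ℝ → ℝ}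
    (hg : ∀ t ∈ Icc a b, HasDerivWithinAt g (g' t) (Icc a b) t)
    (ha0 : g a ≤ 0)
    (hb0 : ∀ t ∈ Icc a b, g t = 0 → g' t < 0) :
    (∀ t ∈ Icc a b, g t ≤ 0) ∧ (∀ t ∈ Ioc a b, g t < 0) := by
  have hcont : ContinuousOn g (Icc a b) := fun t ht => (hg t ht).continuousWithinAt
  have part1 : ∀ t ∈ Icc a b, g t ≤ 0 := by
    by_contra hc
    push_neg at hc
    obtain ⟨s, hs, hgs⟩ := hc
    have has : a < s := by
      rcases eq_or_lt_of_le hs.1 with h | h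
      · exact absurd (h ▸ ha0) (not_le.mpr hgs)
      · exact h
    set S : Set ℝ := Icc a s ∩ g ⁻¹' (Iic 0) with hS
    have hSclosed : IsClosed S :=
      (hcont.mono (Icc_subset_Icc le_rfl hs.2)).preimage_isClosed_of_isClosed
        isClosed_Icc isClosed_Iic
    have hSne : S.Nonempty := ⟨a, ⟨le_rfl, has.le⟩, ha0⟩
    have hSbdd : BddAbove S := ⟨s, fun t ht => ht.1.2⟩
    set τ := sSup S with hτdef
    have hτS : τ ∈ S := hSclosed.csSup_mem hSne hSbdd
    have hτs : τ ≤ s := hτS.1.2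
    have haτ : a ≤ τ := hτS.1.1
    have hτb : τ ∈ Icc a b := ⟨haτ, hτs.trans hs.2⟩
    have hτ0 : g τ ≤ 0 := hτS.2
    have hτlt : τ < s := lt_of_le_of_ne hτs (by
      intro h; rw [h] at hτ0; exact absurd hτ0 (not_le.mpr hgs))
    -- points in (τ, s] have g > 0
    have hpos : ∀ t ∈ Ioc τ s, 0 < g t := by
      intro t ht
      by_contra hle
      push_neg at hle
      have : t ∈ S := ⟨⟨haτ.trans ht.1.le, ht.2⟩, hle⟩
      exact absurd (le_csSup hSbdd this) (not_le.mpr ht.1)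
    have hne : (𝓝[Ioo τ s] τ).NeBot := by
      refine mem_closure_iff_nhdsWithin_neBot.mp ?_
      rw [closure_Ioo hτlt.ne]
      exact ⟨le_rfl, hτlt.le⟩
    -- g τ = 0
    have hgτ : g τ = 0 := by
      rcases eq_or_lt_of_le hτ0 with h | h
      · exact h
      · have hev : ∀ᶠ t in 𝓝[Icc a b] τ, g t < 0 := (hcont τ hτb) (Iio_mem_nhds h)
        have hle : 𝓝[Ioo τ s] τ ≤ 𝓝[Icc a b] τ :=
          nhdsWithin_mono τ (fun t ht => ⟨haτ.trans ht.1.le, ht.2.le.trans hs.2⟩)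
        obtain ⟨t, hgt, htm⟩ := ((hev.filter_mono hle).and self_mem_nhdsWithin).exists
        exact absurd hgt (not_lt.mpr (hpos t ⟨htm.1, htm.2.le⟩).le)
    have hg'neg : g' τ < 0 := hb0 τ hτb hgτ
    have hslope := (hasDerivWithinAt_iff_tendsto_slope.mp (hg τ hτb)).mono_left
      (nhdsWithin_mono τ (fun t ht =>
        ⟨⟨haτ.trans ht.1.le, ht.2.le.trans hs.2⟩, ht.1.ne'⟩) :
        𝓝[Ioo τ s] τ ≤ 𝓝[Icc a b \ {τ}] τ)
    have : (0:ℝ) ≤ g' τ := by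
      refine ge_of_tendsto hslope ?_
      filter_upwards [self_mem_nhdsWithin] with t ht
      rw [slope_def_field, hgτ, sub_zero]
      exact le_of_lt (div_pos (hpos t ⟨ht.1, ht.2.le⟩) (sub_pos.mpr ht.1))
    exact absurd hg'neg (not_lt.mpr this)
  refine ⟨part1, fun t ht => ?_⟩
  rcases lt_or_eq_of_le (part1 t ⟨ht.1.le, ht.2⟩) with h | h
  · exact h
  exfalso
  have htb : t ∈ Icc a b := ⟨ht.1.le, ht.2⟩
  have hg'neg : g' t < 0 := hb0 t htb h
  have hne : (𝓝[Ioo a t] t).NeBot := by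
    refine mem_closure_iff_nhdsWithin_neBot.mp ?_
    rw [closure_Ioo ht.1.ne]
    exact ⟨ht.1.le, le_rfl⟩
  have hslope := (hasDerivWithinAt_iff_tendsto_slope.mp (hg t htb)).mono_left
    (nhdsWithin_mono t (fun u hu =>
      ⟨⟨hu.1.le, hu.2.le.trans ht.2⟩, hu.2.ne⟩) :
      𝓝[Ioo a t] t ≤ 𝓝[Icc a b \ {t}] t)
  have : (0:ℝ) ≤ g' t := by
    refine ge_of_tendsto hslope ?_
    filter_upwards [self_mem_nhdsWithin] with u hu
    rw [slope_def_field, h, sub_zero]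
    have hgu : g u ≤ 0 := part1 u ⟨hu.1.le, hu.2.le.trans ht.2⟩
    exact div_nonneg_of_nonpos hgu (by linarith [hu.2])
  exact absurd hg'neg (not_lt.mpr this)

lemma barrier_ge {a b : ℝ} {g g' : ℝ → ℝ}
    (hg : ∀ t ∈ Icc a b, HasDerivWithinAt g (g' t) (Icc a b) t)
    (ha0 : 0 ≤ g a)
    (hb0 : ∀ t ∈ Icc a b, g t = 0 → 0 < g' t) :
    (∀ t ∈ Icc a b, 0 ≤ g t) ∧ (∀ t ∈ Ioc a b, 0 < g t) := by
  have := barrier_le (g := fun t => -g t) (g' := fun t => -g' t)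
    (fun t ht => (hg t ht).neg) (by simpa using ha0)
    (fun t ht h0 => by
      simp only [neg_eq_zero] at h0
      simpa using hb0 t ht h0)
  constructor
  · intro t ht; simpa using this.1 t ht
  · intro t ht; simpa using this.2 t ht

lemma left_case (f : ℝ → ℝ) (a : ℝ) (ha : 0 < a) (hf : ContDiff ℝ 2 f)
    (hf2 : ∀ u : ℝ, a ≤ deriv (deriv f) u)
    (θ : ℝ) (hθ : deriv f θ = 0)
    (finv : ℝ → ℝ) (hfinv1 : ∀ u : ℝ, finv (deriv f u) = u)
    (hfinv2 : ∀ p : ℝ, deriv f (finv p) = p)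
    (T : ℝ) (hT : 0 < T)
    (B Bbar : ℝ) (hB : θ < B) (hBbar : Bbar ≤ θ) (hfB : f Bbar = f B)
    (R₁ R₂ : ℝ) (hR₁ : R₁ ∈ Ioo (0:ℝ) (T * deriv f B)) (hR₂ : R₂ ∈ Ioo (0:ℝ) (T * deriv f B))
    (hR : R₁ < R₂) (y₁ y₂ : ℝ → ℝ)
    (hy₁ : LeftShockSol f finv T B Bbar R₁ y₁) (hy₂ : LeftShockSol f finv T B Bbar R₂ y₂) :
    y₁ T < y₂ T := by
  have hf'mono : StrictMono (deriv f) :=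
    strictMono_of_deriv_pos (fun x => ha.trans_le (hf2 x))
  have hfpB : 0 < deriv f B := hθ ▸ hf'mono hB
  have hfd : Differentiable ℝ f := hf.differentiable two_ne_zero
  have hfc : Continuous f := hfd.continuous
  have hconv : StrictConvexOn ℝ univ f := by
    refine strictConvexOn_univ_of_deriv2_pos hfc (fun x => ?_)
    have : deriv^[2] f x = deriv (deriv f) x := by
      rw [show (2:ℕ) = 1 + 1 from rfl, Function.iterate_succ_apply', Function.iterate_one]
    rw [this]; exact ha.trans_le (hf2 x)
  -- Bbar < θ
  have hmono_ge : StrictMonoOn f (Ici θ) := by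
    refine strictMonoOn_of_deriv_pos (convex_Ici θ) hfc.continuousOn (fun x hx => ?_)
    rw [interior_Ici] at hx
    exact hθ ▸ hf'mono hx
  have hBbarθ : Bbar < θ := by
    rcases lt_or_eq_of_le hBbar with h | h
    · exact h
    · exfalso
      have := hmono_ge (self_mem_Ici) (le_of_lt hB) hB
      rw [← h, hfB] at this
      exact lt_irrefl _ this
  have hfpBbar : deriv f Bbar < 0 := by
    have := hf'mono hBbarθ
    rwa [hθ] at this
  have hanti : StrictAntiOn f (Iic θ) := by
    refine strictAntiOn_of_deriv_neg (convex_Iic θ) hfc.continuousOn (fun x hx => ?_)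
    rw [interior_Iic] at hx
    exact hθ ▸ hf'mono hx
  -- rewriting lamF against Bbar as a slope
  have hlam_eq : ∀ u : ℝ, lamF f u Bbar = (f u - f Bbar) / (u - Bbar) := by
    intro u
    rw [lamF, ← neg_sub (f u), ← neg_sub u, neg_div_neg_eq]
  -- lamF f u Bbar ≤ 0 for u ≤ B
  have hlamB : lamF f B Bbar = 0 := by
    rw [lamF, hfB, sub_self, zero_div]
  have hlamBbar : lamF f Bbar Bbar = 0 := by
    rw [lamF, sub_self, zero_div]
  have hlam_mono : ∀ u v : ℝ, Bbar < u → u < v → lamF f u Bbar < lamF f v Bbar := by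
    intro u v hu huv
    rw [hlam_eq, hlam_eq]
    exact hconv.secant_strict_mono (mem_univ _) (mem_univ _) (mem_univ _)
      (ne_of_gt hu) (ne_of_gt (hu.trans huv)) huv
  have hlam_nonpos : ∀ u : ℝ, u ≤ B → lamF f u Bbar ≤ 0 := by
    intro u hu
    rcases lt_trichotomy u Bbar with h | h | h
    · rw [hlam_eq]
      have hfu : f Bbar < f u := hanti (h.le.trans hBbarθ.le) hBbarθ.le h
      exact le_of_lt (div_neg_of_pos_of_neg (by linarith) (by linarith))
    · rw [h, hlamBbar]
    · rcases lt_or_eq_of_le hu with h2 | h2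
      · have := hlam_mono u B h h2
        rw [hlamB] at this
        exact this.le
      · rw [h2, hlamB]
  -- key barriers for a single solution
  have key : ∀ R : ℝ, R ∈ Ioo (0:ℝ) (T * deriv f B) → ∀ y : ℝ → ℝ,
      LeftShockSol f finv T B Bbar R y →
      ∀ t ∈ Icc (R / deriv f B) T,
        y t + R ≤ t * deriv f B ∧ t * deriv f Bbar < y t + R := by
    intro R hRm y hy
    have ht₀pos : 0 < R / deriv f B := div_pos hRm.1 hfpB
    have ht₀T : R / deriv f B ≤ T := le_of_lt ((div_lt_iff₀ hfpB).mpr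
      (by rw [mul_comm] at hRm ⊢; exact hRm.2))
    have ht₀R : R / deriv f B * deriv f B = R := div_mul_cancel₀ _ hfpB.ne'
    have htpos : ∀ t ∈ Icc (R / deriv f B) T, 0 < t := fun t ht => ht₀pos.trans_le ht.1
    -- upper barrier
    have hupper := barrier_le
      (g := fun t => (y t + R) - t * deriv f B)
      (g' := fun t => lamF f (finv ((y t + R) / t)) Bbar - deriv f B)
      (fun t ht => ((hy.2 t ht).add_const R).sub
        (show HasDerivWithinAt (fun t : ℝ => t * deriv f B) (deriv f B) (Icc (R / deriv f B) T) t by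
          simpa using (hasDerivWithinAt_id t (Icc (R / deriv f B) T)).mul_const (deriv f B)))
      (show y (R / deriv f B) + R - R / deriv f B * deriv f B ≤ 0 by rw [hy.1, ht₀R]; simp)
      (fun t ht h0 => by
        have ht0 : (0:ℝ) < t := htpos t ht
        have h0' : y t + R - t * deriv f B = 0 := h0
        have heq : (y t + R) / t = deriv f B := by
          have : y t + R = t * deriv f B := by linarith
          rw [this, mul_div_cancel_left₀ _ ht0.ne']
        show lamF f (finv ((y t + R) / t)) Bbar - deriv f B < 0
        rw [heq, hfinv1 B, hlamB]
        linarith)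
    -- lower barrier
    have hlower := barrier_le
      (g := fun t => t * deriv f Bbar - (y t + R))
      (g' := fun t => deriv f Bbar - lamF f (finv ((y t + R) / t)) Bbar)
      (fun t ht =>
        (show HasDerivWithinAt (fun t : ℝ => t * deriv f Bbar) (deriv f Bbar)
            (Icc (R / deriv f B) T) t by
          simpa using (hasDerivWithinAt_id t (Icc (R / deriv f B) T)).mul_const (deriv f Bbar)).sub
        ((hy.2 t ht).add_const R))
      (show R / deriv f B * deriv f Bbar - (y (R / deriv f B) + R) ≤ 0 by
        rw [hy.1, zero_add]
        have : R / deriv f B * deriv f Bbar < 0 := mul_neg_of_pos_of_neg ht₀pos hfpBbar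
        linarith [hRm.1])
      (fun t ht h0 => by
        have ht0 : (0:ℝ) < t := htpos t ht
        have h0' : t * deriv f Bbar - (y t + R) = 0 := h0
        have heq : (y t + R) / t = deriv f Bbar := by
          have : y t + R = t * deriv f Bbar := by linarith
          rw [this, mul_div_cancel_left₀ _ ht0.ne']
        show deriv f Bbar - lamF f (finv ((y t + R) / t)) Bbar < 0
        rw [heq, hfinv1 Bbar, hlamBbar]
        linarith)
    intro t ht
    constructor
    · have h' : y t + R - t * deriv f B ≤ 0 := hupper.1 t ht
      linarith
    · rcases eq_or_lt_of_le ht.1 with h | h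
      · have : R / deriv f B * deriv f Bbar < 0 := mul_neg_of_pos_of_neg ht₀pos hfpBbar
        rw [← h, hy.1]; linarith [hRm.1]
      · have h' : t * deriv f Bbar - (y t + R) < 0 := hlower.2 t ⟨h, ht.2⟩
        linarith
  -- basic time points
  have ht₁pos : 0 < R₁ / deriv f B := div_pos hR₁.1 hfpB
  have ht₁₂ : R₁ / deriv f B < R₂ / deriv f B := by gcongr
  have ht₂T : R₂ / deriv f B < T := (div_lt_iff₀ hfpB).mpr hR₂.2
  have ht₁T : R₁ / deriv f B < T := ht₁₂.trans ht₂T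
  have hsubset : Icc (R₂ / deriv f B) T ⊆ Icc (R₁ / deriv f B) T :=
    Icc_subset_Icc_left ht₁₂.le
  -- y₁ + R₁ is antitone
  have hic : ∀ x ∈ interior (Icc (R₁ / deriv f B) T),
      HasDerivAt y₁ (lamF f (finv ((y₁ x + R₁) / x)) Bbar) x := by
    intro x hx
    rw [interior_Icc] at hx
    exact (hy₁.2 x (Ioo_subset_Icc_self hx)).hasDerivAt (Icc_mem_nhds hx.1 hx.2)
  have hanti_z : AntitoneOn (fun t => y₁ t + R₁) (Icc (R₁ / deriv f B) T) := by
    refine antitoneOn_of_deriv_nonpos (convex_Icc _ _)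
      (fun t ht => ((hy₁.2 t ht).add_const R₁).continuousWithinAt)
      (fun x hx => ((hic x hx).add_const R₁).differentiableAt.differentiableWithinAt)
      (fun x hx => ?_)
    rw [((hic x hx).add_const R₁).deriv]
    have hxm : x ∈ Icc (R₁ / deriv f B) T := interior_subset hx
    have hx0 : 0 < x := ht₁pos.trans_le hxm.1
    have hup : y₁ x + R₁ ≤ x * deriv f B := (key R₁ hR₁ y₁ hy₁ x hxm).1
    refine hlam_nonpos _ ?_
    have hwle : (y₁ x + R₁) / x ≤ deriv f B := (div_le_iff₀ hx0).mpr (by linarith)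
    have : deriv f (finv ((y₁ x + R₁) / x)) ≤ deriv f B := by rw [hfinv2]; exact hwle
    exact hf'mono.le_iff_le.mp this
  have hz₁t₂ : y₁ (R₂ / deriv f B) + R₁ ≤ R₁ := by
    have h' : y₁ (R₂ / deriv f B) + R₁ ≤ y₁ (R₁ / deriv f B) + R₁ :=
      hanti_z ⟨le_rfl, ht₁T.le⟩ ⟨ht₁₂.le, ht₂T.le⟩ ht₁₂.le
    rw [hy₁.1] at h'
    linarith
  set d₀ : ℝ := R₂ - (y₁ (R₂ / deriv f B) + R₁) with hd₀def
  have hd₀ : R₂ - R₁ ≤ d₀ := by rw [hd₀def]; linarith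
  have hd₀pos : 0 < d₀ := by linarith
  -- the comparison barrier
  have hmain := barrier_ge
    (g := fun t => ((y₂ t + R₂) - (y₁ t + R₁)) - d₀)
    (g' := fun t => lamF f (finv ((y₂ t + R₂) / t)) Bbar
      - lamF f (finv ((y₁ t + R₁) / t)) Bbar)
    (fun t ht => (((hy₂.2 t ht).add_const R₂).sub
      (((hy₁.2 t (hsubset ht)).mono hsubset).add_const R₁)).sub_const d₀)
    (by
      show 0 ≤ (y₂ (R₂ / deriv f B) + R₂ - (y₁ (R₂ / deriv f B) + R₁)) - d₀
      rw [hy₂.1, hd₀def]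
      ring_nf
      exact le_rfl)
    (fun t ht h0 => by
      have h0' : (y₂ t + R₂) - (y₁ t + R₁) - d₀ = 0 := h0
      have ht0 : 0 < t := (ht₁pos.trans ht₁₂).trans_le ht.1
      have key₁ := key R₁ hR₁ y₁ hy₁ t (hsubset ht)
      have key₂ := key R₂ hR₂ y₂ hy₂ t ht
      have hz12 : y₁ t + R₁ < y₂ t + R₂ := by linarith
      have hw12 : (y₁ t + R₁) / t < (y₂ t + R₂) / t := by gcongr
      have hw1lo : deriv f Bbar < (y₁ t + R₁) / t :=
        (lt_div_iff₀ ht0).mpr (by linarith [key₁.2])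
      have hu1 : Bbar < finv ((y₁ t + R₁) / t) := by
        refine hf'mono.lt_iff_lt.mp ?_
        rw [hfinv2]
        exact hw1lo
      have hu12 : finv ((y₁ t + R₁) / t) < finv ((y₂ t + R₂) / t) := by
        refine hf'mono.lt_iff_lt.mp ?_
        rw [hfinv2, hfinv2]
        exact hw12
      show 0 < lamF f (finv ((y₂ t + R₂) / t)) Bbar - lamF f (finv ((y₁ t + R₁) / t)) Bbar
      have := hlam_mono _ _ hu1 hu12
      linarith)
  have hfin : 0 < (y₂ T + R₂) - (y₁ T + R₁) - d₀ := hmain.2 T ⟨ht₂T, le_rfl⟩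
  linarith


lemma right_case (f : ℝ → ℝ) (a : ℝ) (ha : 0 < a) (hf : ContDiff ℝ 2 f)
    (hf2 : ∀ u : ℝ, a ≤ deriv (deriv f) u)
    (θ : ℝ) (hθ : deriv f θ = 0)
    (finv : ℝ → ℝ) (hfinv1 : ∀ u : ℝ, finv (deriv f u) = u)
    (hfinv2 : ∀ p : ℝ, deriv f (finv p) = p)
    (T : ℝ) (hT : 0 < T)
    (A Abar : ℝ) (hA : A < θ) (hAbar : θ ≤ Abar) (hfA : f Abar = f A)
    (L₁ L₂ : ℝ) (hL₁ : L₁ ∈ Ioo (T * deriv f A) (0:ℝ)) (hL₂ : L₂ ∈ Ioo (T * deriv f A) (0:ℝ))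
    (hL : L₁ < L₂) (x₁ x₂ : ℝ → ℝ)
    (hx₁ : RightShockSol f finv T A Abar L₁ x₁) (hx₂ : RightShockSol f finv T A Abar L₂ x₂) :
    x₁ T < x₂ T := by
  set g : ℝ → ℝ := fun u => f (-u) with hgdef
  set ginv : ℝ → ℝ := fun p => -finv (-p) with hginvdef
  have hfd1 : ContDiff ℝ 1 (deriv f) := by
    have h2 : ContDiff ℝ ((1:ℕ) + 1) f := by exact_mod_cast hf
    exact_mod_cast (contDiff_succ_iff_deriv.mp h2).2.2
  have hf'd : Differentiable ℝ (deriv f) := hfd1.differentiable one_ne_zero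
  have hfd : Differentiable ℝ f := hf.differentiable two_ne_zero
  have hg' : ∀ u : ℝ, deriv g u = -deriv f (-u) := by
    intro u
    have h1 : HasDerivAt g (deriv f (-u) * (-1)) u :=
      ((hfd (-u)).hasDerivAt).comp u (hasDerivAt_neg u)
    have := h1.deriv
    rw [this]; ring
  have hgfun : deriv g = fun u => -deriv f (-u) := funext hg'
  have hgC : ContDiff ℝ 2 g := hf.comp (contDiff_id.neg)
  have hg2 : ∀ u : ℝ, a ≤ deriv (deriv g) u := by
    intro u
    have h1 : HasDerivAt (fun v : ℝ => deriv f (-v)) (deriv (deriv f) (-u) * (-1)) u :=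
      ((hf'd (-u)).hasDerivAt).comp u (hasDerivAt_neg u)
    have h2 : HasDerivAt (fun v : ℝ => -deriv f (-v)) (deriv (deriv f) (-u)) u := by
      have this : HasDerivAt (fun v : ℝ => -deriv f (-v)) (-(deriv (deriv f) (-u) * (-1))) u := h1.neg
      convert this using 1
      ring
    rw [hgfun, h2.deriv]
    exact hf2 (-u)
  have hθg : deriv g (-θ) = 0 := by rw [hg' (-θ), neg_neg, hθ, neg_zero]
  have hginv1 : ∀ u : ℝ, ginv (deriv g u) = u := by
    intro u
    rw [hginvdef, hg' u]
    simp [hfinv1 (-u)]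
  have hginv2 : ∀ p : ℝ, deriv g (ginv p) = p := by
    intro p
    rw [hginvdef]
    simp only
    rw [hg', neg_neg, hfinv2]
    ring
  have hgA : deriv g (-A) = -deriv f A := by rw [hg' (-A), neg_neg]
  have hfAneg : deriv f A < 0 := by
    have hmono : StrictMono (deriv f) := strictMono_of_deriv_pos
      (fun x => ha.trans_le (hf2 x))
    have := hmono hA
    rwa [hθ] at this
  -- lamF reflection identity
  have hlam_refl : ∀ v w : ℝ, lamF g (-v) (-w) = -lamF f v w := by
    intro v w
    show (g (-w) - g (-v)) / (-w - -v) = -((f w - f v) / (w - v))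
    rw [hgdef]
    simp only [neg_neg]
    rw [show (-w - -v : ℝ) = -(w - v) by ring, div_neg]
  -- translate a right solution into a left solution for g
  have translate : ∀ L : ℝ, L ∈ Ioo (T * deriv f A) (0:ℝ) → ∀ x : ℝ → ℝ,
      RightShockSol f finv T A Abar L x →
      LeftShockSol g ginv T (-A) (-Abar) (-L) (fun t => -x t) := by
    intro L hLm x hx
    have hset : (-L) / deriv g (-A) = L / deriv f A := by
      rw [hgA, neg_div_neg_eq]
    constructor
    · rw [hset]
      simp [hx.1]
    · intro t ht
      rw [hset] at ht ⊢
      have hder : HasDerivWithinAt (fun t => -x t) (-lamF f (finv ((x t + L) / t)) Abar)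
          (Icc (L / deriv f A) T) t := (hx.2 t ht).neg
      convert hder using 1
      have harg : ginv ((-x t + -L) / t) = -finv ((x t + L) / t) := by
        rw [hginvdef]
        simp only
        rw [show ((-x t + -L) / t : ℝ) = -((x t + L) / t) by ring, neg_neg]
      rw [harg, show (-Abar : ℝ) = -Abar from rfl]
      exact hlam_refl (finv ((x t + L) / t)) Abar
  -- apply the left case
  have hmemneg : ∀ L : ℝ, L ∈ Ioo (T * deriv f A) (0:ℝ) → -L ∈ Ioo (0:ℝ) (T * deriv g (-A)) := by
    intro L hLm
    rw [hgA, mul_neg]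
    exact ⟨by linarith [hLm.2], by linarith [hLm.1]⟩
  have hfg : g (-Abar) = g (-A) := by
    show f (-(-Abar)) = f (-(-A))
    rw [neg_neg, neg_neg]
    exact hfA
  have hres := left_case g a ha hgC hg2 (-θ) hθg ginv hginv1 hginv2 T hT (-A) (-Abar)
    (by linarith) (by linarith) hfg
    (-L₂) (-L₁) (hmemneg L₂ hL₂) (hmemneg L₁ hL₁) (by linarith)
    (fun t => -x₂ t) (fun t => -x₁ t)
    (translate L₂ hL₂ x₂ hx₂) (translate L₁ hL₁ x₁ hx₁)
  linarith

/-- **Lemma 3.1**: strict monotonicity of the terminal values of the backward shocks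
with respect to the data `R` (resp. `L`). -/
theorem backward_shock_terminal_strict_mono
    (f : ℝ → ℝ) (a : ℝ) (ha : 0 < a) (hf : ContDiff ℝ 2 f)
    (hf2 : ∀ u : ℝ, a ≤ deriv (deriv f) u)
    (θ : ℝ) (hθ : deriv f θ = 0)
    (finv : ℝ → ℝ) (hfinv1 : ∀ u : ℝ, finv (deriv f u) = u)
    (hfinv2 : ∀ p : ℝ, deriv f (finv p) = p)
    (T : ℝ) (hT : 0 < T) :
    (∀ B Bbar : ℝ, θ < B → Bbar ≤ θ → f Bbar = f B →
      ∀ R₁ R₂ : ℝ, R₁ ∈ Ioo (0:ℝ) (T * deriv f B) → R₂ ∈ Ioo (0:ℝ) (T * deriv f B) →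
        R₁ < R₂ →
        ∀ y₁ y₂ : ℝ → ℝ, LeftShockSol f finv T B Bbar R₁ y₁ →
          LeftShockSol f finv T B Bbar R₂ y₂ → y₁ T < y₂ T) ∧
    (∀ A Abar : ℝ, A < θ → θ ≤ Abar → f Abar = f A →
      ∀ L₁ L₂ : ℝ, L₁ ∈ Ioo (T * deriv f A) (0:ℝ) → L₂ ∈ Ioo (T * deriv f A) (0:ℝ) →
        L₁ < L₂ →
        ∀ x₁ x₂ : ℝ → ℝ, RightShockSol f finv T A Abar L₁ x₁ →
          RightShockSol f finv T A Abar L₂ x₂ → x₁ T < x₂ T) :=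
  ⟨fun B Bbar hB hBbar hfB R₁ R₂ h1 h2 h12 y₁ y₂ hy₁ hy₂ =>
    left_case f a ha hf hf2 θ hθ finv hfinv1 hfinv2 T hT B Bbar hB hBbar hfB
      R₁ R₂ h1 h2 h12 y₁ y₂ hy₁ hy₂,
   fun A Abar hA hAbar hfA L₁ L₂ h1 h2 h12 x₁ x₂ hx₁ hx₂ =>
    right_case f a ha hf hf2 θ hθ finv hfinv1 hfinv2 T hT A Abar hA hAbar hfA
      L₁ L₂ h1 h2 h12 x₁ x₂ hx₁ hx₂⟩
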